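/- Let G be a countable linearly ordered group and let τ be a T1 topology on 𝓑(G) such that (𝓑(G), τ) is a Baire space and for every s ∈ 𝓑(G) the left translation x ↦ s·x and the right translation x ↦ x·s are continuous. Then the topological space (𝓑(G), τ) is discrete. -/

import Mathlib

/-- The multiplication of the bicyclic extension `𝓑(G) = G × G` of a linearly ordered
group `G`: `(a,b)·(c,d) = (c·b⁻¹·a, d)` if `b < c`; `(a,d)` if `b = c`;
`(a, b·c⁻¹·d)` if `b > c`. -/
def bmul {G : Type*} [Group G] [LinearOrder G] (s t : G × G) : G × G :=
  if s.2 < t.1 then (t.1 * s.2⁻¹ * s.1, t.2)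
  else if s.2 = t.1 then (s.1, t.2)
  else (s.1, s.2 * t.1⁻¹ * t.2)

/-- Theorem 3.2 for `𝓑(G)`: for a countable linearly ordered group `G`, every Baire
`T₁`-topology on `𝓑(G)` with separately continuous multiplication is discrete. -/
theorem baire_t1_implies_discrete {G : Type*} [Group G] [LinearOrder G]
    [CovariantClass G G (· * ·) (· ≤ ·)]
    [CovariantClass G G (Function.swap (· * ·)) (· ≤ ·)]
    [Countable G]
    [TopologicalSpace (G × G)] [T1Space (G × G)] [BaireSpace (G × G)]
    (hl : ∀ s : G × G, Continuous fun x : G × G => bmul s x)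
    (hr : ∀ s : G × G, Continuous fun x : G × G => bmul x s) :
    DiscreteTopology (G × G) := by
  rw [discreteTopology_iff_isOpen_singleton]
  by_cases hone : ∀ g : G, g = 1
  · intro x
    have hx : ({x} : Set (G × G)) = Set.univ := by
      apply Set.eq_univ_of_forall
      intro y
      have : y = x := by
        have h1 := hone y.1; have h2 := hone y.2
        have h3 := hone x.1; have h4 := hone x.2
        ext
        · rw [h1, h3]
        · rw [h2, h4]
      simp [this]
    rw [hx]; exact isOpen_univ
  · push_neg at hone
    obtain ⟨g0, hg0⟩ := hone
    obtain ⟨g, hg⟩ : ∃ g : G, 1 < g := by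
      rcases lt_or_gt_of_ne hg0 with h | h
      · exact ⟨g0⁻¹, one_lt_inv_of_inv h⟩
      · exact ⟨g0, h⟩
    -- Baire gives an isolated point
    obtain ⟨z, hz⟩ : ∃ z : G × G, IsOpen ({z} : Set (G × G)) := by
      obtain ⟨z, hz⟩ := nonempty_interior_of_iUnion_of_closed
        (f := fun z : G × G => ({z} : Set (G × G)))
        (fun z => isClosed_singleton) (Set.iUnion_of_singleton _)
      refine ⟨z, ?_⟩
      have h2 : interior ({z} : Set (G × G)) = {z} :=
        (Set.Nonempty.subset_singleton_iff hz).mp interior_subset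
      rw [← h2]; exact isOpen_interior
    obtain ⟨p, q⟩ := z
    rintro ⟨u, v⟩
    set b := u * g⁻¹ with hbdef
    set a := b * u⁻¹ * p with hadef
    set c := v * g⁻¹ with hcdef
    set d := c * v⁻¹ * q with hddef
    have hb : b < u := by
      rw [hbdef]
      calc u * g⁻¹ < u * 1 := mul_lt_mul_right (inv_lt_one'.mpr hg) u
        _ = u := mul_one u
    have hc : c < v := by
      rw [hcdef]
      calc v * g⁻¹ < v * 1 := mul_lt_mul_right (inv_lt_one'.mpr hg) v
        _ = v := mul_one v
    have hap : a < p := by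
      rw [hadef]
      calc b * u⁻¹ * p < u * u⁻¹ * p :=
            mul_lt_mul_left (mul_lt_mul_left hb u⁻¹) p
        _ = p := by group
    have hdq : d < q := by
      rw [hddef]
      calc c * v⁻¹ * q < v * v⁻¹ * q :=
            mul_lt_mul_left (mul_lt_mul_left hc v⁻¹) q
        _ = q := by group
    have hf : Continuous fun x : G × G => bmul (bmul (a, b) x) (c, d) :=
      (hr (c, d)).comp (hl (a, b))
    have key : (fun x : G × G => bmul (bmul (a, b) x) (c, d)) ⁻¹' {(p, q)}
        = {((u, v) : G × G)} := by
      ext ⟨x1, x2⟩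
      simp only [Set.mem_preimage, Set.mem_singleton_iff]
      constructor
      · intro h
        rcases lt_trichotomy b x1 with h1 | h1 | h1
        · have hy : bmul (a, b) (x1, x2) = (x1 * b⁻¹ * a, x2) := by
            simp [bmul, h1]
          rw [hy] at h
          rcases lt_trichotomy x2 c with h2 | h2 | h2
          · simp [bmul, h2] at h
            exact absurd h.2 (ne_of_lt hdq)
          · simp [bmul, h2, lt_irrefl] at h
            exact absurd h.2 (ne_of_lt hdq)
          · have hy2 : bmul (x1 * b⁻¹ * a, x2) (c, d) = (x1 * b⁻¹ * a, x2 * c⁻¹ * d) := by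
              simp [bmul, not_lt_of_gt h2, ne_of_gt h2]
            rw [hy2, Prod.mk.injEq] at h
            obtain ⟨e1, e2⟩ := h
            rw [Prod.mk.injEq]
            constructor
            · -- x1 * b⁻¹ * (b * u⁻¹ * p) = p ⊢ x1 = u
              rw [hadef] at e1
              have e1' : x1 * u⁻¹ * p = p :=
                (by group : x1 * u⁻¹ * p = x1 * b⁻¹ * (b * u⁻¹ * p)).trans e1
              have : x1 * u⁻¹ = 1 := mul_right_cancel (by rw [e1', one_mul])
              exact mul_inv_eq_one.mp this
            · rw [hddef] at e2
              have e2' : x2 * v⁻¹ * q = q :=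
                (by group : x2 * v⁻¹ * q = x2 * c⁻¹ * (c * v⁻¹ * q)).trans e2
              have : x2 * v⁻¹ = 1 := mul_right_cancel (by rw [e2', one_mul])
              exact mul_inv_eq_one.mp this
        · have hy : bmul (a, b) (x1, x2) = (a, x2) := by
            simp [bmul, h1, lt_irrefl]
          rw [hy] at h
          rcases lt_trichotomy x2 c with h2 | h2 | h2
          · simp [bmul, h2] at h
            exact absurd h.2 (ne_of_lt hdq)
          · simp [bmul, h2, lt_irrefl] at h
            exact absurd h.2 (ne_of_lt hdq)
          · have hy2 : bmul (a, x2) (c, d) = (a, x2 * c⁻¹ * d) := by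
              simp [bmul, not_lt_of_gt h2, ne_of_gt h2]
            rw [hy2, Prod.mk.injEq] at h
            exact absurd h.1 (ne_of_lt hap)
        · have hy : bmul (a, b) (x1, x2) = (a, b * x1⁻¹ * x2) := by
            simp [bmul, not_lt_of_gt h1, ne_of_gt h1]
          rw [hy] at h
          rcases lt_trichotomy (b * x1⁻¹ * x2) c with h2 | h2 | h2
          · simp [bmul, h2] at h
            exact absurd h.2 (ne_of_lt hdq)
          · simp [bmul, h2, lt_irrefl] at h
            exact absurd h.2 (ne_of_lt hdq)
          · have hy2 : bmul (a, b * x1⁻¹ * x2) (c, d) = (a, b * x1⁻¹ * x2 * c⁻¹ * d) := by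
              simp [bmul, not_lt_of_gt h2, ne_of_gt h2]
            rw [hy2, Prod.mk.injEq] at h
            exact absurd h.1 (ne_of_lt hap)
      · intro h
        rw [Prod.mk.injEq] at h
        obtain ⟨rfl, rfl⟩ := h
        have e1 : x1 * b⁻¹ * a = p := by rw [hadef]; group
        have hy : bmul (a, b) (x1, x2) = (p, x2) := by
          simp [bmul, hb, e1]
        rw [hy]
        have e2 : x2 * c⁻¹ * d = q := by rw [hddef]; group
        simp [bmul, not_lt_of_gt hc, ne_of_gt hc, e2]
    have hopen := hz.preimage hf
    rw [key] at hopen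
    exact hopen
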